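/- Let 1 ≤ q ≤ 2 ≤ p < ∞ and define r by 1/r = 1/q − 1/p. For every bounded linear operator A : ℓ^p → ℓ^q whose matrix entries a_{j,k} := (A e_k)_j are all nonnegative reals, one has ( ∑_j ( ∑_k a_{j,k}² )^{r/2} )^{1/r} ≤ ‖A‖, i.e. the Hardy–Littlewood row inequality holds with constant M = 1. -/

import Mathlib

private lemma hlrow_add_rpow {x y e : ℝ} (hx : 0 ≤ x) (hy : 0 ≤ y) (he : 1 ≤ e) :
    x ^ e + y ^ e ≤ (x + y) ^ e := by
  have h := NNReal.coe_le_coe.mpr (NNReal.add_rpow_le_rpow_add x.toNNReal y.toNNReal he)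
  simpa [NNReal.coe_rpow, Real.toNNReal_add hx hy,
    Real.coe_toNNReal x hx, Real.coe_toNNReal y hy] using h

private lemma hlrow_sum_rpow {ι : Type*} (s : Finset ι) (f : ι → ℝ) (hf : ∀ i ∈ s, 0 ≤ f i)
    {e : ℝ} (he : 1 ≤ e) : ∑ i ∈ s, f i ^ e ≤ (∑ i ∈ s, f i) ^ e := by
  classical
  induction s using Finset.cons_induction with
  | empty => simp [Real.zero_rpow (by linarith : e ≠ 0)]
  | cons a s ha ih =>
    have hfa : 0 ≤ f a := hf a (Finset.mem_cons_self a s)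
    have hfs : ∀ i ∈ s, 0 ≤ f i := fun i hi => hf i (Finset.mem_cons.2 (Or.inr hi))
    have hsum : 0 ≤ ∑ i ∈ s, f i := Finset.sum_nonneg hfs
    rw [Finset.sum_cons, Finset.sum_cons]
    calc f a ^ e + ∑ i ∈ s, f i ^ e ≤ f a ^ e + (∑ i ∈ s, f i) ^ e := by
          linarith [ih hfs]
      _ ≤ (f a + ∑ i ∈ s, f i) ^ e := hlrow_add_rpow hfa hsum he

set_option maxHeartbeats 1000000
/-- **Hardy–Littlewood row inequality for positive operators, with constant 1.**
For `1 ≤ q ≤ 2 ≤ p < ∞` and `1/r = 1/q - 1/p`, every bounded operator `A : ℓ^p → ℓ^q`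
whose matrix entries `(A e_k) j = a j k` are nonnegative reals satisfies
`(∑_j (∑_k (a j k)²)^(r/2))^(1/r) ≤ ‖A‖`. -/
theorem hardy_littlewood_row_positive (p q r : ℝ) (hq1 : 1 ≤ q) (hq2 : q ≤ 2) (hp2 : 2 ≤ p)
    [Fact (1 ≤ ENNReal.ofReal p)] [Fact (1 ≤ ENNReal.ofReal q)]
    (hr : 0 < r) (hrdef : 1 / r = 1 / q - 1 / p)
    (A : lp (fun _ : ℕ => ℂ) (ENNReal.ofReal p) →L[ℂ] lp (fun _ : ℕ => ℂ) (ENNReal.ofReal q))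
    (a : ℕ → ℕ → ℝ) (ha : ∀ j k, 0 ≤ a j k)
    (hAa : ∀ j k : ℕ, A (lp.single (ENNReal.ofReal p) k 1) j = (a j k : ℂ)) :
    (∑' j : ℕ, (∑' k : ℕ, a j k ^ (2 : ℝ)) ^ (r / 2)) ^ (1 / r) ≤ ‖A‖ := by
  classical
  have hp0 : (0:ℝ) < p := lt_of_lt_of_le two_pos hp2
  have hq0 : (0:ℝ) < q := lt_of_lt_of_le one_pos hq1
  have hp0' : p ≠ 0 := ne_of_gt hp0
  have hq0' : q ≠ 0 := ne_of_gt hq0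
  have hr0' : r ≠ 0 := ne_of_gt hr
  have hPt : (ENNReal.ofReal p).toReal = p := ENNReal.toReal_ofReal hp0.le
  have hQt : (ENNReal.ofReal q).toReal = q := ENNReal.toReal_ofReal hq0.le
  have hM0 : (0:ℝ) ≤ ‖A‖ := norm_nonneg A
  have hkey : q * (p + r) = r * p := by
    field_simp at hrdef
    linarith [hrdef]
  set e : ℝ := r / (2 * p) - 1 / 2 with he_def
  have id1 : e * p + p / 2 = r / 2 := by rw [he_def]; field_simp; ring
  have id2 : (e + 1) * q = r / 2 := by
    rw [he_def]; field_simp; nlinarith [hkey]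
  -- the key finite-matrix inequality
  have core : ∀ F G : Finset ℕ,
      ∑ j ∈ F, (∑ k ∈ G, a j k ^ 2) ^ (r / 2) ≤ ‖A‖ ^ r := by
    intro F G
    set S : ℕ → ℝ := fun j => ∑ k ∈ G, a j k ^ 2 with hS_def
    have hS0 : ∀ j, 0 ≤ S j := fun j => Finset.sum_nonneg fun k _ => sq_nonneg _
    set T : ℝ := ∑ j ∈ F, S j ^ (r / 2) with hT_def
    have hT0 : 0 ≤ T := Finset.sum_nonneg fun j _ => Real.rpow_nonneg (hS0 j) _
    rcases eq_or_lt_of_le hT0 with h0 | hTpos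
    · exact h0 ▸ Real.rpow_nonneg hM0 r
    set lam : ℕ → ℝ := fun j => S j ^ e with hlam_def
    have hlam0 : ∀ j, 0 ≤ lam j := fun j => Real.rpow_nonneg (hS0 j) _
    set x : ℕ → ℝ := fun k => (∑ j ∈ F, (lam j * a j k) ^ p) ^ (1 / p) with hx_def
    have hx0 : ∀ k, 0 ≤ x k := fun k => Real.rpow_nonneg
      (Finset.sum_nonneg fun j _ => Real.rpow_nonneg (mul_nonneg (hlam0 j) (ha j k)) _) _
    have hxp : ∀ k, x k ^ p = ∑ j ∈ F, (lam j * a j k) ^ p := by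
      intro k
      rw [hx_def]
      simp only [one_div]
      exact Real.rpow_inv_rpow
        (Finset.sum_nonneg fun j _ => Real.rpow_nonneg (mul_nonneg (hlam0 j) (ha j k)) _)
        hp0'
    have hlx : ∀ j ∈ F, ∀ k, lam j * a j k ≤ x k := by
      intro j hj k
      have h1 : (lam j * a j k) ^ p ≤ ∑ j' ∈ F, (lam j' * a j' k) ^ p :=
        Finset.single_le_sum
          (fun j' _ => Real.rpow_nonneg (mul_nonneg (hlam0 j') (ha j' k)) _) hj
      have h2 : ((lam j * a j k) ^ p) ^ (1 / p) ≤ x k := by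
        rw [hx_def]
        exact Real.rpow_le_rpow (Real.rpow_nonneg (mul_nonneg (hlam0 j) (ha j k)) _) h1
          (by positivity)
      rwa [one_div, Real.rpow_rpow_inv (mul_nonneg (hlam0 j) (ha j k)) hp0'] at h2
    have fact1 : ∀ j ∈ F, ∑ k ∈ G, (lam j * a j k) ^ p ≤ S j ^ (r / 2) := by
      intro j _
      have hsum : ∑ k ∈ G, (lam j * a j k) ^ p = lam j ^ p * ∑ k ∈ G, a j k ^ p := by
        rw [Finset.mul_sum]
        exact Finset.sum_congr rfl fun k _ => Real.mul_rpow (hlam0 j) (ha j k)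
      have hap : ∀ k, a j k ^ p = (a j k ^ 2) ^ (p / 2) := by
        intro k
        rw [← Real.rpow_natCast (a j k) 2, ← Real.rpow_mul (ha j k)]
        congr 1
        ring
      have h2 : ∑ k ∈ G, a j k ^ p ≤ S j ^ (p / 2) := by
        calc ∑ k ∈ G, a j k ^ p = ∑ k ∈ G, (a j k ^ 2) ^ (p / 2) :=
              Finset.sum_congr rfl fun k _ => hap k
          _ ≤ (∑ k ∈ G, a j k ^ 2) ^ (p / 2) :=
              hlrow_sum_rpow G _ (fun k _ => sq_nonneg _) (by linarith)
      rw [hsum]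
      by_cases hSj : S j = 0
      · have hall : ∀ k ∈ G, a j k = 0 := by
          intro k hk
          have h3 := (Finset.sum_eq_zero_iff_of_nonneg
            (fun k _ => sq_nonneg (a j k))).1 hSj k hk
          exact pow_eq_zero_iff (two_ne_zero) |>.1 h3
        have h4 : ∑ k ∈ G, a j k ^ p = 0 := Finset.sum_eq_zero fun k hk => by
          rw [hall k hk]; exact Real.zero_rpow hp0'
        rw [h4, mul_zero, hSj, Real.zero_rpow (by positivity : r / 2 ≠ 0)]
      · have hSpos : 0 < S j := lt_of_le_of_ne (hS0 j) (Ne.symm hSj)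
        calc lam j ^ p * ∑ k ∈ G, a j k ^ p ≤ lam j ^ p * S j ^ (p / 2) :=
              mul_le_mul_of_nonneg_left h2 (Real.rpow_nonneg (hlam0 j) _)
          _ = S j ^ (r / 2) := by
              simp only [hlam_def]
              rw [← Real.rpow_mul (hS0 j), ← Real.rpow_add hSpos, id1]
    have fact2 : ∀ j, (lam j * S j) ^ q = S j ^ (r / 2) := by
      intro j
      by_cases hSj : S j = 0
      · rw [hSj, mul_zero, Real.zero_rpow hq0', Real.zero_rpow (by positivity : r / 2 ≠ 0)]
      · have hSpos : 0 < S j := lt_of_le_of_ne (hS0 j) (Ne.symm hSj)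
        have h1 : lam j * S j = S j ^ (e + 1) := by
          simp only [hlam_def]
          rw [Real.rpow_add hSpos, Real.rpow_one]
        rw [h1, ← Real.rpow_mul (hS0 j), id2]
    set X : lp (fun _ : ℕ => ℂ) (ENNReal.ofReal p) :=
      ∑ k ∈ G, lp.single (ENNReal.ofReal p) k ((x k : ℂ)) with hX_def
    have hPt0 : 0 < (ENNReal.ofReal p).toReal := by rw [hPt]; exact hp0
    have hQt0 : 0 < (ENNReal.ofReal q).toReal := by rw [hQt]; exact hq0
    have hXnorm : ‖X‖ ^ p ≤ T := by
      have h := lp.norm_sum_single hPt0 (fun k => ((x k : ℝ) : ℂ)) G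
      rw [hPt, ← hX_def] at h
      rw [h]
      calc ∑ k ∈ G, ‖((x k : ℝ) : ℂ)‖ ^ p = ∑ k ∈ G, x k ^ p := by
            refine Finset.sum_congr rfl fun k _ => ?_
            rw [Complex.norm_real, Real.norm_of_nonneg (hx0 k)]
        _ = ∑ k ∈ G, ∑ j ∈ F, (lam j * a j k) ^ p :=
            Finset.sum_congr rfl fun k _ => hxp k
        _ = ∑ j ∈ F, ∑ k ∈ G, (lam j * a j k) ^ p := Finset.sum_comm
        _ ≤ ∑ j ∈ F, S j ^ (r / 2) := Finset.sum_le_sum fact1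
        _ = T := rfl
    have hXle : ‖X‖ ≤ T ^ (1 / p) := by
      have h1 : (‖X‖ ^ p) ^ (1 / p) ≤ T ^ (1 / p) :=
        Real.rpow_le_rpow (Real.rpow_nonneg (norm_nonneg X) p) hXnorm (by positivity)
      rw [one_div]
      rwa [one_div, Real.rpow_rpow_inv (norm_nonneg X) hp0'] at h1
    have hAX : ∀ j : ℕ, (A X) j = ((∑ k ∈ G, x k * a j k : ℝ) : ℂ) := by
      intro j
      have h1 : A X = ∑ k ∈ G, (x k : ℂ) •
          A (lp.single (ENNReal.ofReal p) k 1 : lp (fun _ : ℕ => ℂ) (ENNReal.ofReal p)) := by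
        rw [hX_def, map_sum]
        refine Finset.sum_congr rfl fun k _ => ?_
        have h2 : (lp.single (ENNReal.ofReal p) k ((x k : ℝ) : ℂ) :
              lp (fun _ : ℕ => ℂ) (ENNReal.ofReal p)) =
            (x k : ℂ) • (lp.single (ENNReal.ofReal p) k (1 : ℂ) :
              lp (fun _ : ℕ => ℂ) (ENNReal.ofReal p)) := by
          rw [← lp.single_smul]
          norm_num
        rw [h2, map_smul]
      calc (A X) j = ∑ k ∈ G, ((x k : ℂ) •
            A (lp.single (ENNReal.ofReal p) k 1 : lp (fun _ : ℕ => ℂ) (ENNReal.ofReal p))) j := by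
            rw [h1, lp.coeFn_sum, Finset.sum_apply]
        _ = ∑ k ∈ G, (x k : ℂ) * (a j k : ℂ) := by
            refine Finset.sum_congr rfl fun k _ => ?_
            rw [lp.coeFn_smul, Pi.smul_apply, hAa j k, smul_eq_mul]
        _ = ((∑ k ∈ G, x k * a j k : ℝ) : ℂ) := by norm_cast
    have hlow : ∀ j ∈ F, lam j * S j ≤ ‖(A X) j‖ := by
      intro j hj
      have hsum0 : 0 ≤ ∑ k ∈ G, x k * a j k :=
        Finset.sum_nonneg fun k _ => mul_nonneg (hx0 k) (ha j k)
      rw [hAX j, Complex.norm_real, Real.norm_of_nonneg hsum0]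
      calc lam j * S j = ∑ k ∈ G, lam j * a j k * a j k := by
            rw [hS_def, Finset.mul_sum]
            exact Finset.sum_congr rfl fun k _ => by ring
        _ ≤ ∑ k ∈ G, x k * a j k :=
            Finset.sum_le_sum fun k _ =>
              mul_le_mul_of_nonneg_right (hlx j hj k) (ha j k)
    have hTle : T ≤ (‖A‖ * T ^ (1 / p)) ^ q := by
      have h1 : T = ∑ j ∈ F, (lam j * S j) ^ q :=
        (Finset.sum_congr rfl fun j _ => fact2 j).symm
      have h2 : ∑ j ∈ F, (lam j * S j) ^ q ≤ ∑ j ∈ F, ‖(A X) j‖ ^ q :=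
        Finset.sum_le_sum fun j hj =>
          Real.rpow_le_rpow (mul_nonneg (hlam0 j) (hS0 j)) (hlow j hj) hq0.le
      have h3 : ∑ j ∈ F, ‖(A X) j‖ ^ q ≤ ‖A X‖ ^ q := by
        have h := lp.sum_rpow_le_norm_rpow hQt0 (A X) F
        rwa [hQt] at h
      have h4 : ‖A X‖ ^ q ≤ (‖A‖ * T ^ (1 / p)) ^ q := by
        refine Real.rpow_le_rpow (norm_nonneg _) ?_ hq0.le
        calc ‖A X‖ ≤ ‖A‖ * ‖X‖ := A.le_opNorm X
          _ ≤ ‖A‖ * T ^ (1 / p) := mul_le_mul_of_nonneg_left hXle hM0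
      exact le_trans (le_of_eq h1) (le_trans h2 (le_trans h3 h4))
    have h5 : T ≤ ‖A‖ ^ q * T ^ (q / p) := by
      have hmul : (‖A‖ * T ^ (1 / p)) ^ q = ‖A‖ ^ q * (T ^ (1 / p)) ^ q :=
        Real.mul_rpow hM0 (Real.rpow_nonneg hT0 _)
      have hTp : (T ^ (1 / p)) ^ q = T ^ (q / p) := by
        rw [← Real.rpow_mul hT0, show 1 / p * q = q / p by ring]
      rw [hmul, hTp] at hTle
      exact hTle
    have h6 : T ^ (q / r) ≤ ‖A‖ ^ q := by
      have hsplit : T = T ^ (1 - q / p) * T ^ (q / p) := by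
        rw [← Real.rpow_add hTpos, sub_add_cancel, Real.rpow_one]
      have hpow_pos : 0 < T ^ (q / p) := Real.rpow_pos_of_pos hTpos _
      have h7 : T ^ (1 - q / p) * T ^ (q / p) ≤ ‖A‖ ^ q * T ^ (q / p) := by
        rw [← hsplit]; exact h5
      have h8 : T ^ (1 - q / p) ≤ ‖A‖ ^ q := (mul_le_mul_iff_of_pos_right hpow_pos).mp h7
      have hexp : 1 - q / p = q / r := by
        field_simp
        nlinarith [hkey]
      rwa [hexp] at h8
    have h9 : (T ^ (q / r)) ^ (r / q) ≤ (‖A‖ ^ q) ^ (r / q) :=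
      Real.rpow_le_rpow (Real.rpow_nonneg hT0 _) h6 (by positivity)
    have hl1 : (T ^ (q / r)) ^ (r / q) = T := by
      rw [← Real.rpow_mul hT0, show q / r * (r / q) = 1 by field_simp, Real.rpow_one]
    have hl2 : (‖A‖ ^ q) ^ (r / q) = ‖A‖ ^ r := by
      rw [← Real.rpow_mul hM0, show q * (r / q) = r by field_simp]
    rw [hl1, hl2] at h9
    exact h9
  -- pass to infinite sums
  simp only [Real.rpow_two]
  have hRsummable : ∀ j, Summable fun k => a j k ^ 2 := by
    intro j
    refine summable_of_sum_le (c := ‖A‖ ^ (r * (2 / r))) (fun k => sq_nonneg (a j k)) fun G => ?_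
    have h1 := core {j} G
    rw [Finset.sum_singleton] at h1
    have hs0 : (0:ℝ) ≤ ∑ k ∈ G, a j k ^ 2 := Finset.sum_nonneg fun k _ => sq_nonneg _
    have h2 : ((∑ k ∈ G, a j k ^ 2) ^ (r / 2)) ^ (2 / r) ≤ (‖A‖ ^ r) ^ (2 / r) :=
      Real.rpow_le_rpow (Real.rpow_nonneg hs0 _) h1 (by positivity)
    rwa [← Real.rpow_mul hs0, show r / 2 * (2 / r) = 1 by field_simp, Real.rpow_one,
      ← Real.rpow_mul hM0] at h2
  have hRle : ∀ F : Finset ℕ, ∑ j ∈ F, (∑' k, a j k ^ 2) ^ (r / 2) ≤ ‖A‖ ^ r := by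
    intro F
    have htend : Filter.Tendsto (fun G : Finset ℕ => ∑ j ∈ F, (∑ k ∈ G, a j k ^ 2) ^ (r / 2))
        Filter.atTop (nhds (∑ j ∈ F, (∑' k, a j k ^ 2) ^ (r / 2))) := by
      refine tendsto_finset_sum F fun j _ => ?_
      have h1 : Filter.Tendsto (fun G : Finset ℕ => ∑ k ∈ G, a j k ^ 2) Filter.atTop
          (nhds (∑' k, a j k ^ 2)) := (hRsummable j).hasSum
      exact ((Real.continuousAt_rpow_const _ (r / 2) (Or.inr (by positivity))).tendsto.comp h1)
    exact le_of_tendsto htend (Filter.Eventually.of_forall fun G => core F G)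
  have hnonneg : ∀ j, 0 ≤ (∑' k, a j k ^ 2) ^ (r / 2) :=
    fun j => Real.rpow_nonneg (tsum_nonneg fun k => sq_nonneg _) _
  have hsummable2 : Summable fun j => (∑' k, a j k ^ 2) ^ (r / 2) :=
    summable_of_sum_le (fun j => hnonneg j) hRle
  have htsum : ∑' j, (∑' k, a j k ^ 2) ^ (r / 2) ≤ ‖A‖ ^ r := Summable.tsum_le_of_sum_le hsummable2 hRle
  calc (∑' j, (∑' k, a j k ^ 2) ^ (r / 2)) ^ (1 / r)
      ≤ (‖A‖ ^ r) ^ (1 / r) :=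
        Real.rpow_le_rpow (tsum_nonneg fun j => hnonneg j) htsum (by positivity)
    _ = ‖A‖ := by rw [one_div, Real.rpow_rpow_inv hM0 hr0']
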